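/- Let A ∈ ℝ^{n×n}, B ∈ ℝ^{n×m}, and let V ⊆ ℝⁿ be a subspace. Then A·V ⊆ V + Im(B) holds if and only if there exists a matrix K ∈ ℝ^{m×n} such that (A + BK)·V ⊆ V. -/

import Mathlib

/-- `A·V ⊆ V + Im(B)` iff there is a state feedback `K` such that
`(A + BK)·V ⊆ V`. -/
theorem stmt_6 (n m : ℕ) (A : Matrix (Fin n) (Fin n) ℝ)
    (B : Matrix (Fin n) (Fin m) ℝ) (V : Submodule ℝ (Fin n → ℝ)) :
    (∀ x ∈ V, A.mulVec x ∈ V ⊔ LinearMap.range B.mulVecLin) ↔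
    (∃ K : Matrix (Fin m) (Fin n) ℝ, ∀ x ∈ V, (A + B * K).mulVec x ∈ V) := by
  constructor
  · intro h
    obtain ⟨q, hq⟩ := Submodule.exists_isCompl V
    set b := Module.Basis.ofVectorSpace ℝ V with hb
    have hchoice : ∀ i, ∃ w : Fin m → ℝ, A.mulVec (b i) - B.mulVec w ∈ V := by
      intro i
      have h2 := h (b i) (b i).2
      rw [Submodule.mem_sup] at h2
      obtain ⟨v, hv, z, hz, hvz⟩ := h2
      obtain ⟨w, hw⟩ := hz
      refine ⟨w, ?_⟩
      have : A.mulVec ↑(b i) - B.mulVec w = v := by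
        rw [show B.mulVec w = z from hw, ← hvz]; abel
      rwa [this]
    choose w hw using hchoice
    let f : V →ₗ[ℝ] (Fin m → ℝ) := b.constr ℝ (fun i => - w i)
    let g := f ∘ₗ (V.linearProjOfIsCompl q hq)
    refine ⟨LinearMap.toMatrix' g, ?_⟩
    have key : ∀ v : V, A.mulVec ↑v + B.mulVec (f v) ∈ V := by
      let T : V →ₗ[ℝ] (Fin n → ℝ) :=
        A.mulVecLin ∘ₗ V.subtype + B.mulVecLin ∘ₗ f
      have hT : ⊤ ≤ V.comap T := by
        rw [← b.span_eq]
        apply Submodule.span_le.mpr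
        rintro _ ⟨i, rfl⟩
        simp only [T, f, SetLike.mem_coe, Submodule.mem_comap, LinearMap.add_apply,
          LinearMap.coe_comp, Function.comp_apply, Submodule.coe_subtype,
          Matrix.mulVecLin_apply, Module.Basis.constr_basis, Matrix.mulVec_neg,
          ← sub_eq_add_neg]
        exact hw i
      intro v
      exact hT (Submodule.mem_top (x := v))
    intro x hx
    have hk := key ⟨x, hx⟩
    have hgx : g x = f ⟨x, hx⟩ := by
      simp only [g, LinearMap.coe_comp, Function.comp_apply]
      exact congrArg f (Submodule.projectionOnto_apply_of_mem_left hq hx)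
    have : (A + B * LinearMap.toMatrix' g).mulVec x
        = A.mulVec x + B.mulVec (f ⟨x, hx⟩) := by
      rw [Matrix.add_mulVec, ← Matrix.mulVec_mulVec]
      congr 1
      rw [show (LinearMap.toMatrix' g).mulVec x = g x by
        rw [← Matrix.mulVecLin_apply, ← Matrix.toLin'_apply',
          Matrix.toLin'_toMatrix']]
      rw [hgx]
    rwa [this]
  · rintro ⟨K, hK⟩ x hx
    have h1 := hK x hx
    rw [Submodule.mem_sup]
    refine ⟨(A + B * K).mulVec x, h1, B.mulVec (-(K.mulVec x)), ⟨_, rfl⟩, ?_⟩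
    rw [Matrix.add_mulVec, ← Matrix.mulVec_mulVec, Matrix.mulVec_neg]
    abel
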